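/- arXiv:2604.14323 — 2 statements merged into one kernel-verified Lean document; each statement's English description precedes it below -/
import Mathlib

section
/- (Surjectivity of the lowering map.) Fix integers m ≥ 1 and k ≥ 1. The restricted lowering map L_k : End(P_k) → End(P_{k−1}), T ↦ Σ_{s=1}^m ∂_s ∘ T ∘ x_s, is surjective: every ℂ-linear endomorphism of P_{k−1} is of the form Σ_s ∂_s ∘ T ∘ x_s for some ℂ-linear endomorphism T of P_k. -/
set_option maxHeartbeats 1000000
set_option synthInstance.maxHeartbeats 4000000


open MvPolynomial

noncomputable section

/-- The `k`-photon sector `P_k`: homogeneous polynomials of degree `k` in `m` variables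
(the Bargmann realization of the `m`-mode bosonic Fock space). -/
abbrev P (m k : ℕ) : Submodule ℂ (MvPolynomial (Fin m) ℂ) :=
  homogeneousSubmodule (Fin m) ℂ k

lemma mulX_mem {m d : ℕ} (s : Fin m) {p : MvPolynomial (Fin m) ℂ} (hp : p ∈ P m d) :
    MvPolynomial.X s * p ∈ P m (d + 1) := by
  rw [mem_homogeneousSubmodule] at hp ⊢
  have := (isHomogeneous_X ℂ s).mul hp
  rwa [Nat.add_comm] at this

lemma degree_single_one {m : ℕ} (s : Fin m) : (Finsupp.single s 1).degree = 1 := by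
  rw [Finsupp.degree_single]

lemma pderiv_mem {m d : ℕ} (s : Fin m) {p : MvPolynomial (Fin m) ℂ}
    (hp : p ∈ P m (d + 1)) : MvPolynomial.pderiv s p ∈ P m d := by
  rw [mem_homogeneousSubmodule] at hp
  rw [as_sum p, map_sum]
  apply Submodule.sum_mem
  intro u hu
  rw [pderiv_monomial]
  by_cases h : u s = 0
  · simp [h]
  · rw [mem_homogeneousSubmodule]
    apply isHomogeneous_monomial
    have hle : Finsupp.single s 1 ≤ u :=
      Finsupp.single_le_iff.mpr (Nat.one_le_iff_ne_zero.mpr h)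
    have hsum : (u - Finsupp.single s 1) + Finsupp.single s 1 = u :=
      tsub_add_cancel_of_le hle
    have hdeg : u.degree = d + 1 := by
      have hc : coeff u p ≠ 0 := (mem_support_iff).mp hu
      have := hp hc
      rwa [Finsupp.degree_eq_weight_one]
    have hadd : (u - Finsupp.single s 1).degree + (Finsupp.single s 1).degree = u.degree := by
      simp_rw [Finsupp.degree_eq_weight_one]
      rw [← map_add, hsum]
    rw [degree_single_one] at hadd
    omega

/-- Multiplication by `x_s` as a linear map `P_d → P_{d+1}`. -/
def xRes (m d : ℕ) (s : Fin m) : P m d →ₗ[ℂ] P m (d + 1) :=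
  (LinearMap.mulLeft ℂ (MvPolynomial.X s)).restrict fun _q hq => mulX_mem s hq

/-- The partial derivative `∂_s` as a linear map `P_{d+1} → P_d`. -/
def dRes (m d : ℕ) (s : Fin m) : P m (d + 1) →ₗ[ℂ] P m d :=
  (MvPolynomial.pderiv s).toLinearMap.restrict fun _q hq => pderiv_mem s hq

/-- The restricted lowering map `L_{d+1} : End(P_{d+1}) → End(P_d)`,
`T ↦ Σ_s ∂_s ∘ T ∘ x_s`. -/
def Lres (m d : ℕ) :
    Module.End ℂ (P m (d + 1)) →ₗ[ℂ] Module.End ℂ (P m d) where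
  toFun T := ∑ s, dRes m d s ∘ₗ T ∘ₗ xRes m d s
  map_add' T T' := by
    rw [← Finset.sum_add_distrib]
    exact Finset.sum_congr rfl fun s _ => by
      rw [LinearMap.add_comp, LinearMap.comp_add]
  map_smul' c T := by
    simp [Finset.smul_sum, LinearMap.smul_comp, LinearMap.comp_smul]

/-- The restricted raising map `R_{d+1} : End(P_d) → End(P_{d+1})`,
`T ↦ Σ_s x_s ∘ T ∘ ∂_s`. -/
def Rres (m d : ℕ) :
    Module.End ℂ (P m d) →ₗ[ℂ] Module.End ℂ (P m (d + 1)) where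
  toFun T := ∑ s, xRes m d s ∘ₗ T ∘ₗ dRes m d s
  map_add' T T' := by
    rw [← Finset.sum_add_distrib]
    exact Finset.sum_congr rfl fun s _ => by
      rw [LinearMap.add_comp, LinearMap.comp_add]
  map_smul' c T := by
    simp [Finset.smul_sum, LinearMap.smul_comp, LinearMap.comp_smul]

end

noncomputable section Stmt15Aux

open Finsupp

/-- A coefficient ≠ at the homogeneous degree vanishes. -/
lemma coeff_eq_zero_of_degree_ne {m d : ℕ} (p : P m d) {γ : Fin m →₀ ℕ}
    (hγ : γ.degree ≠ d) : MvPolynomial.coeff γ (p : MvPolynomial (Fin m) ℂ) = 0 := by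
  by_contra h
  have hp := (mem_homogeneousSubmodule _ _).mp p.2
  have := hp h
  rw [Pi.one_def, ← Finsupp.degree_eq_weight_one] at this
  exact hγ this

/-- A monomial as an element of `P m d`; zero if the degree is wrong. -/
def mono (m d : ℕ) (α : Fin m →₀ ℕ) : P m d :=
  if h : α.degree = d then
    ⟨MvPolynomial.monomial α 1, (mem_homogeneousSubmodule _ _).mpr
      (isHomogeneous_monomial 1 h)⟩
  else 0

lemma mono_val {m d : ℕ} {α : Fin m →₀ ℕ} (h : α.degree = d) :
    (mono m d α : MvPolynomial (Fin m) ℂ) = MvPolynomial.monomial α 1 := by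
  simp [mono, h]

lemma mono_eq_zero {m d : ℕ} {α : Fin m →₀ ℕ} (h : α.degree ≠ d) :
    mono m d α = 0 := by
  simp [mono, h]

/-- The coefficient functional on `P m d`. -/
def coeffL (m d : ℕ) (β : Fin m →₀ ℕ) : P m d →ₗ[ℂ] ℂ :=
  (MvPolynomial.lcoeff ℂ β).comp (Submodule.subtype _)

lemma coeffL_apply {m d : ℕ} (β : Fin m →₀ ℕ) (p : P m d) :
    coeffL m d β p = MvPolynomial.coeff β (p : MvPolynomial (Fin m) ℂ) := rfl

/-- The rank-one operator `p ↦ coeff_β(p) • x^α` on `P m d`. -/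
def Eop (m d : ℕ) (α β : Fin m →₀ ℕ) : Module.End ℂ (P m d) :=
  (coeffL m d β).smulRight (mono m d α)

lemma Eop_apply {m d : ℕ} (α β : Fin m →₀ ℕ) (p : P m d) :
    Eop m d α β p = MvPolynomial.coeff β (p : MvPolynomial (Fin m) ℂ) • mono m d α := rfl

lemma Eop_eq_zero_left {m d : ℕ} {α : Fin m →₀ ℕ} (β : Fin m →₀ ℕ) (h : α.degree ≠ d) :
    Eop m d α β = 0 := by
  ext p
  simp [Eop_apply, mono_eq_zero h]

lemma Eop_eq_zero_right {m d : ℕ} (α : Fin m →₀ ℕ) {β : Fin m →₀ ℕ} (h : β.degree ≠ d) :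
    Eop m d α β = 0 := by
  ext p
  simp [Eop_apply, coeff_eq_zero_of_degree_ne p h]

lemma degree_sub_single {m : ℕ} {α : Fin m →₀ ℕ} {s : Fin m} (hs : α s ≠ 0) :
    (α - Finsupp.single s 1).degree + 1 = α.degree := by
  have hle : Finsupp.single s 1 ≤ α :=
    Finsupp.single_le_iff.mpr (Nat.one_le_iff_ne_zero.mpr hs)
  have hsum : (α - Finsupp.single s 1) + Finsupp.single s 1 = α := tsub_add_cancel_of_le hle
  have : (α - Finsupp.single s 1).degree + (Finsupp.single s 1).degree = α.degree := by
    simp_rw [Finsupp.degree_eq_weight_one]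
    rw [← map_add, hsum]
  rwa [degree_single_one] at this

lemma sub_single_eq_self {m : ℕ} {α : Fin m →₀ ℕ} {s : Fin m} (hs : α s = 0) :
    α - Finsupp.single s 1 = α := by
  ext t
  rw [Finsupp.tsub_apply]
  rcases eq_or_ne t s with rfl | ht
  · simp [hs]
  · simp [Finsupp.single_apply, Ne.symm ht]

lemma degree_add_single {m : ℕ} (f : Fin m →₀ ℕ) (s : Fin m) :
    (f + Finsupp.single s 1).degree = f.degree + 1 := by
  have h := map_add (Finsupp.weight (1 : Fin m → ℕ)) f (Finsupp.single s 1)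
  rw [Pi.one_def, ← Finsupp.degree_eq_weight_one] at h
  rw [h, degree_single_one]

/-- The key identity: `L(E_{α+e₀, β+e₀}) = Σ_s (α+e₀)_s • E_{α+e₀-e_s, β+e₀-e_s}`. -/
lemma key_identity {m j : ℕ} (s₀ : Fin m) {α β : Fin m →₀ ℕ}
    (hα : α.degree = j) (hβ : β.degree = j) :
    Lres m j (Eop m (j + 1) (α + Finsupp.single s₀ 1) (β + Finsupp.single s₀ 1)) =
      ∑ s : Fin m, (((α + Finsupp.single s₀ 1 : Fin m →₀ ℕ) s : ℂ)) •
        Eop m j (α + Finsupp.single s₀ 1 - Finsupp.single s 1)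
                (β + Finsupp.single s₀ 1 - Finsupp.single s 1) := by
  classical
  set α' := α + Finsupp.single s₀ 1 with hα'def
  set β' := β + Finsupp.single s₀ 1 with hβ'def
  have hα' : α'.degree = j + 1 := by
    rw [hα'def, degree_add_single, hα]
  show (∑ s, dRes m j s ∘ₗ (Eop m (j+1) α' β') ∘ₗ xRes m j s) = _
  refine Finset.sum_congr rfl fun s _ => LinearMap.ext fun p => Subtype.ext ?_
  have hxv : ((xRes m j s p : P m (j+1)) : MvPolynomial (Fin m) ℂ)
      = MvPolynomial.X s * (p : MvPolynomial (Fin m) ℂ) := rfl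
  have hEv : ∀ q : P m (j+1), ((dRes m j s q : P m j) : MvPolynomial (Fin m) ℂ)
      = MvPolynomial.pderiv s (q : MvPolynomial (Fin m) ℂ) := fun q => rfl
  simp only [LinearMap.comp_apply, LinearMap.smul_apply, Eop_apply]
  rw [hEv]
  simp only [Eop_apply, hxv]
  rw [Submodule.coe_smul, Submodule.coe_smul, Submodule.coe_smul, mono_val hα', Derivation.map_smul,
    MvPolynomial.pderiv_monomial, one_mul]
  rw [MvPolynomial.coeff_X_mul']
  by_cases hs : s ∈ β'.support
  · simp only [hs, if_true]
    by_cases hαs : α' s = 0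
    · rw [hαs]
      simp
    · have hdeg : (α' - Finsupp.single s 1).degree = j := by
        have := degree_sub_single (α := α') hαs
        omega
      rw [mono_val hdeg]
      rw [MvPolynomial.smul_monomial, MvPolynomial.smul_monomial, MvPolynomial.smul_monomial]
      congr 1
      simp [smul_eq_mul]
      ring
  · simp only [hs, if_false]
    have hβs : β' s = 0 := by simpa using hs
    have : β' - Finsupp.single s 1 = β' := sub_single_eq_self hβs
    rw [this]
    have hβ' : β'.degree = j + 1 := by
      rw [hβ'def, degree_add_single, hβ]
    rw [coeff_eq_zero_of_degree_ne p (by omega)]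
    simp

/-- Each rank-one operator with homogeneous indices is in the range of `Lres`. -/
lemma Eop_mem_range {m j : ℕ} (hm : 1 ≤ m) :
    ∀ (n : ℕ) (α β : Fin m →₀ ℕ), α.degree = j → β.degree = j →
      j - β ⟨0, hm⟩ = n → Eop m j α β ∈ LinearMap.range (Lres m j) := by
  classical
  set s₀ : Fin m := ⟨0, hm⟩
  intro n
  induction n using Nat.strong_induction_on with
  | _ n ih =>
    intro α β hα hβ hn
    have hkey := key_identity s₀ hα hβ
    rw [← Finset.add_sum_erase _ _ (Finset.mem_univ s₀)] at hkey
    have h0 : (α + Finsupp.single s₀ 1 : Fin m →₀ ℕ) s₀ = α s₀ + 1 := by simp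
    have h1 : α + Finsupp.single s₀ 1 - Finsupp.single s₀ 1 = α := add_tsub_cancel_right _ _
    have h2 : β + Finsupp.single s₀ 1 - Finsupp.single s₀ 1 = β := add_tsub_cancel_right _ _
    rw [h0, h1, h2] at hkey
    have hsum_mem : (∑ s ∈ Finset.univ.erase s₀,
        (((α + Finsupp.single s₀ 1 : Fin m →₀ ℕ) s : ℂ)) •
          Eop m j (α + Finsupp.single s₀ 1 - Finsupp.single s 1)
                  (β + Finsupp.single s₀ 1 - Finsupp.single s 1))
        ∈ LinearMap.range (Lres m j) := by
      apply Submodule.sum_mem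
      intro s hs
      apply Submodule.smul_mem
      have hss₀ : s ≠ s₀ := (Finset.mem_erase.mp hs).1
      set α'' := α + Finsupp.single s₀ 1 - Finsupp.single s 1
      set β'' := β + Finsupp.single s₀ 1 - Finsupp.single s 1
      by_cases hαd : α''.degree = j
      · by_cases hβd : β''.degree = j
        · -- both degrees are right; apply the induction hypothesis
          have hβs : β s ≠ 0 := by
            intro h
            have hz : (β + Finsupp.single s₀ 1 : Fin m →₀ ℕ) s = 0 := by
              simp [Finsupp.single_apply, hss₀, Ne.symm hss₀, h]
            have : β'' = β + Finsupp.single s₀ 1 := sub_single_eq_self hz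
            rw [this] at hβd
            have : (β + Finsupp.single s₀ 1).degree = j + 1 := by
              rw [degree_add_single, hβ]
            omega
          have hβ''s₀ : β'' s₀ = β s₀ + 1 := by
            show (β + Finsupp.single s₀ 1 - Finsupp.single s 1 : Fin m →₀ ℕ) s₀ = _
            rw [Finsupp.tsub_apply, Finsupp.add_apply]
            simp [Finsupp.single_apply, hss₀, Ne.symm hss₀]
          have hle : β'' s₀ ≤ j := by
            have := Finsupp.le_degree s₀ β''
            omega
          have hlt : j - β'' s₀ < n := by omega
          exact ih _ hlt α'' β'' hαd hβd rfl
        · rw [Eop_eq_zero_right _ hβd]; exact Submodule.zero_mem _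
      · rw [Eop_eq_zero_left _ hαd]; exact Submodule.zero_mem _
    have hc' : ((α s₀ + 1 : ℕ) : ℂ) ≠ 0 := Nat.cast_ne_zero.mpr (Nat.succ_ne_zero _)
    have hmem2 : ((α s₀ + 1 : ℕ) : ℂ) • Eop m j α β ∈ LinearMap.range (Lres m j) := by
      have hL : Lres m j (Eop m (j + 1) (α + Finsupp.single s₀ 1) (β + Finsupp.single s₀ 1))
          ∈ LinearMap.range (Lres m j) := ⟨_, rfl⟩
      have h : ((α s₀ + 1 : ℕ) : ℂ) • Eop m j α β
          = Lres m j (Eop m (j + 1) (α + Finsupp.single s₀ 1) (β + Finsupp.single s₀ 1)) -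
            ∑ s ∈ Finset.univ.erase s₀,
              (((α + Finsupp.single s₀ 1 : Fin m →₀ ℕ) s : ℂ)) •
                Eop m j (α + Finsupp.single s₀ 1 - Finsupp.single s 1)
                        (β + Finsupp.single s₀ 1 - Finsupp.single s 1) :=
        by rw [hkey]; abel
      rw [h]
      exact Submodule.sub_mem (M := Module.End ℂ (P m j)) _ hL hsum_mem
    have hEE : Eop m j α β = ((α s₀ + 1 : ℕ) : ℂ)⁻¹ • (((α s₀ + 1 : ℕ) : ℂ) • Eop m j α β) := by
      rw [smul_smul, inv_mul_cancel₀ hc', one_smul]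
    rw [hEE]
    exact Submodule.smul_mem _ _ hmem2

/-- The finite index set of degree-`d` exponents. -/
def idx (m d : ℕ) : Finset (Fin m →₀ ℕ) :=
  (Finset.Iic (Finsupp.equivFunOnFinite.symm fun _ => d)).filter (fun β => β.degree = d)

lemma mem_idx_degree {m d : ℕ} {β : Fin m →₀ ℕ} (h : β ∈ idx m d) : β.degree = d :=
  (Finset.mem_filter.mp h).2

lemma mem_idx_of_degree {m d : ℕ} {β : Fin m →₀ ℕ} (h : β.degree = d) : β ∈ idx m d := by
  refine Finset.mem_filter.mpr ⟨Finset.mem_Iic.mpr ?_, h⟩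
  intro s
  have := Finsupp.le_degree s β
  simpa using this.trans_eq h

/-- Decomposition of an element of `P m d` over the monomial family. -/
lemma P_decompose {m d : ℕ} (p : P m d) :
    p = ∑ β ∈ idx m d, coeffL m d β p • mono m d β := by
  classical
  apply Subtype.ext
  have hval : ((∑ β ∈ idx m d, coeffL m d β p • mono m d β : P m d) :
      MvPolynomial (Fin m) ℂ)
      = ∑ β ∈ idx m d, coeffL m d β p • ((mono m d β : P m d) : MvPolynomial (Fin m) ℂ) := by
    push_cast
    rfl
  rw [hval]
  have hsupp : (p : MvPolynomial (Fin m) ℂ).support ⊆ idx m d := by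
    intro β hβ
    apply mem_idx_of_degree
    by_contra h
    exact (MvPolynomial.mem_support_iff.mp hβ) (coeff_eq_zero_of_degree_ne p h)
  conv_lhs => rw [(p : MvPolynomial (Fin m) ℂ).as_sum]
  rw [Finset.sum_subset hsupp]
  · refine Finset.sum_congr rfl fun β hβ => ?_
    rw [mono_val (mem_idx_degree hβ), coeffL_apply, MvPolynomial.smul_monomial, smul_eq_mul,
      mul_one]
  · intro β _ hβ
    rw [MvPolynomial.notMem_support_iff.mp hβ]
    simp

lemma smulRight_sum {R M M₂ ι : Type*} [CommRing R] [AddCommGroup M] [AddCommGroup M₂]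
    [Module R M] [Module R M₂] (f : M →ₗ[R] R) (s : Finset ι) (g : ι → M₂) :
    f.smulRight (∑ i ∈ s, g i) = ∑ i ∈ s, f.smulRight (g i) := by
  ext p
  simp [Finset.smul_sum]

end Stmt15Aux

/-- Surjectivity of the lowering map. For `m ≥ 1` and `k ≥ 1`
(here `k = j + 1`), the restricted lowering map `L_k : End(P_k) → End(P_{k−1})`,
`T ↦ Σ_s ∂_s ∘ T ∘ x_s`, is surjective. -/
theorem stmt15 (m j : ℕ) (hm : 1 ≤ m) (T' : Module.End ℂ (P m j)) :
    ∃ T : Module.End ℂ (P m (j + 1)), Lres m j T = T' := by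
  classical
  have hdecomp : T' = ∑ β ∈ idx m j, (coeffL m j β).smulRight (T' (mono m j β)) := by
    ext p
    conv_lhs => rw [P_decompose p]
    simp only [map_sum, map_smul, LinearMap.sum_apply, LinearMap.smulRight_apply]
  have hmem : ∀ β ∈ idx m j,
      (coeffL m j β).smulRight (T' (mono m j β)) ∈ LinearMap.range (Lres m j) := by
    intro β hβ
    rw [P_decompose (T' (mono m j β)), smulRight_sum]
    apply Submodule.sum_mem
    intro α hα
    have heq : (coeffL m j β).smulRight (coeffL m j α (T' (mono m j β)) • mono m j α)
        = coeffL m j α (T' (mono m j β)) • Eop m j α β := by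
      ext p
      simp only [LinearMap.smulRight_apply, LinearMap.smul_apply, Eop_apply, coeffL_apply]
      rw [smul_comm]
    rw [heq]
    exact Submodule.smul_mem _ _
      (Eop_mem_range hm (j - β ⟨0, hm⟩) α β (mem_idx_degree hα) (mem_idx_degree hβ) rfl)
  rw [hdecomp]
  exact LinearMap.mem_range.mp (Submodule.sum_mem _ hmem)
end

section
/- (Bosonic birthday paradox at the quadratic threshold.) Let c > 0 be a real and let m : ℕ → ℕ be a sequence with m(n)/n² → c. Then the fraction of collision-free configurations among all n-photon, m(n)-mode configurations converges: C(m(n), n) / C(m(n)+n−1, n) → exp(−1/c) as n → ∞. -/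
open Filter

open Finset
lemma choose_cast_eq (M n : ℕ) (h : n ≤ M) :
    (M.choose n : ℝ) * (n.factorial : ℝ) = ∏ k ∈ range n, ((M : ℝ) - k) := by
  have h1 : ((M.descFactorial n : ℕ) : ℝ) = ∏ k ∈ range n, ((M : ℝ) - k) := by
    rw [Nat.descFactorial_eq_prod_range, Nat.cast_prod]
    refine Finset.prod_congr rfl fun k hk => ?_
    exact Nat.cast_sub (le_trans (Nat.le_of_lt_succ (Nat.lt_succ_of_lt (mem_range.mp hk))) h)
  rw [← h1, Nat.descFactorial_eq_factorial_mul_choose]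
  push_cast
  ring

lemma ratio_eq (m n : ℕ) (h : n ≤ m) (hm : 1 ≤ m) :
    ((m.choose n : ℝ)) / (((m + n - 1).choose n : ℝ)) =
      ∏ k ∈ range n, (((m : ℝ) - k) / ((m : ℝ) + k)) := by
  have h1 := choose_cast_eq m n h
  have h2 := choose_cast_eq (m + n - 1) n (by omega)
  have h3 : ∏ k ∈ range n, (((m + n - 1 : ℕ) : ℝ) - k) = ∏ k ∈ range n, ((m : ℝ) + k) := by
    have hcast : ((m + n - 1 : ℕ) : ℝ) = (m : ℝ) + n - 1 := by
      push_cast [Nat.cast_sub (by omega : 1 ≤ m + n)]; ring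
    rw [← Finset.prod_range_reflect (fun j => (m : ℝ) + j) n]
    refine Finset.prod_congr rfl fun k hk => ?_
    have hk' : k < n := mem_range.mp hk
    have : ((n - 1 - k : ℕ) : ℝ) = (n : ℝ) - 1 - k := by
      push_cast [Nat.cast_sub (by omega : k ≤ n - 1), Nat.cast_sub (by omega : 1 ≤ n)]; ring
    rw [this, hcast]; ring
  have hfac : (0 : ℝ) < (n.factorial : ℝ) := by positivity
  have hden : (0 : ℝ) < (((m + n - 1).choose n : ℕ) : ℝ) := by
    have := Nat.choose_pos (show n ≤ m + n - 1 by omega)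
    positivity
  rw [Finset.prod_div_distrib, ← h1, ← h3, ← h2]
  field_simp

lemma gauss_sum (n : ℕ) : ∑ k ∈ range n, (2 * (k : ℝ)) = (n : ℝ) * ((n : ℝ) - 1) := by
  rcases Nat.eq_zero_or_pos n with h0 | h0
  · subst h0; simp
  · have h2 := congrArg (Nat.cast : ℕ → ℝ) (Finset.sum_range_id_mul_two n)
    push_cast [Nat.cast_sub h0] at h2
    rw [← Finset.mul_sum] at *
    linarith

lemma upper_bound (m n : ℕ) (h : (n : ℝ) < m) :
    ∏ k ∈ range n, (((m : ℝ) - k) / ((m : ℝ) + k)) ≤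
      Real.exp (-((n : ℝ) * ((n : ℝ) - 1)) / ((m : ℝ) + n)) := by
  have hn0 : (0 : ℝ) ≤ (n : ℝ) := Nat.cast_nonneg n
  have hmn : (0 : ℝ) < (m : ℝ) + n := by linarith
  calc ∏ k ∈ range n, (((m : ℝ) - k) / ((m : ℝ) + k))
      ≤ ∏ k ∈ range n, Real.exp (-(2 * (k : ℝ)) / ((m : ℝ) + n)) := by
        refine Finset.prod_le_prod (fun k hk => ?_) (fun k hk => ?_)
        · have hk' : (k : ℝ) < n := by exact_mod_cast mem_range.mp hk
          have hk0 : (0 : ℝ) ≤ (k : ℝ) := Nat.cast_nonneg k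
          have hn0 : (0 : ℝ) ≤ (n : ℝ) := Nat.cast_nonneg n
          exact div_nonneg (by linarith) (by linarith)
        · have hk' : (k : ℝ) < n := by exact_mod_cast mem_range.mp hk
          have hk0 : (0 : ℝ) ≤ (k : ℝ) := Nat.cast_nonneg k
          have hn0 : (0 : ℝ) ≤ (n : ℝ) := Nat.cast_nonneg n
          have hmk : (0 : ℝ) < (m : ℝ) + k := by linarith
          have e1 : ((m : ℝ) - k) / ((m : ℝ) + k) = 1 + (-(2 * (k : ℝ)) / ((m : ℝ) + k)) := by
            field_simp; ring
          rw [e1]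
          calc 1 + (-(2 * (k : ℝ)) / ((m : ℝ) + k))
              ≤ Real.exp (-(2 * (k : ℝ)) / ((m : ℝ) + k)) := by
                linarith [Real.add_one_le_exp (-(2 * (k : ℝ)) / ((m : ℝ) + k))]
            _ ≤ Real.exp (-(2 * (k : ℝ)) / ((m : ℝ) + n)) := by
                apply Real.exp_le_exp.mpr
                rw [neg_div, neg_div, neg_le_neg_iff]
                gcongr <;> linarith
    _ = Real.exp (-((n : ℝ) * ((n : ℝ) - 1)) / ((m : ℝ) + n)) := by
        rw [← Real.exp_sum]
        congr 1
        rw [← Finset.sum_div, Finset.sum_neg_distrib, gauss_sum, neg_div]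

lemma lower_bound (m n : ℕ) (h : (n : ℝ) < m) :
    Real.exp (-((n : ℝ) * ((n : ℝ) - 1)) / ((m : ℝ) - n)) ≤
      ∏ k ∈ range n, (((m : ℝ) - k) / ((m : ℝ) + k)) := by
  have hmn : (0 : ℝ) < (m : ℝ) - n := by linarith
  calc Real.exp (-((n : ℝ) * ((n : ℝ) - 1)) / ((m : ℝ) - n))
      = ∏ k ∈ range n, Real.exp (-(2 * (k : ℝ)) / ((m : ℝ) - n)) := by
        rw [← Real.exp_sum]
        congr 1
        rw [← Finset.sum_div, Finset.sum_neg_distrib, gauss_sum, neg_div]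
    _ ≤ ∏ k ∈ range n, (((m : ℝ) - k) / ((m : ℝ) + k)) := by
        refine Finset.prod_le_prod (fun k hk => (Real.exp_pos _).le) (fun k hk => ?_)
        have hk' : (k : ℝ) < n := by exact_mod_cast mem_range.mp hk
        have hk0 : (0 : ℝ) ≤ (k : ℝ) := Nat.cast_nonneg k
        have hn0 : (0 : ℝ) ≤ (n : ℝ) := Nat.cast_nonneg n
        have hmk : (0 : ℝ) < (m : ℝ) - k := by linarith
        have hmk' : (0 : ℝ) < (m : ℝ) + k := by linarith
        rw [neg_div, Real.exp_neg]
        rw [inv_le_comm₀ (Real.exp_pos _) (by positivity)]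
        have e1 : (((m : ℝ) - k) / ((m : ℝ) + k))⁻¹ = 1 + 2 * (k : ℝ) / ((m : ℝ) - k) := by
          rw [inv_div]; field_simp; ring
        rw [e1]
        calc 1 + 2 * (k : ℝ) / ((m : ℝ) - k)
            ≤ 1 + 2 * (k : ℝ) / ((m : ℝ) - n) := by
              gcongr <;> linarith
          _ ≤ Real.exp (2 * (k : ℝ) / ((m : ℝ) - n)) := by
              linarith [Real.add_one_le_exp (2 * (k : ℝ) / ((m : ℝ) - n))]

/-- Bosonic birthday paradox at the quadratic threshold.
If `m n / n² → c > 0`, the fraction of collision-free configurations among all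
`n`-photon, `m n`-mode configurations tends to `exp(−1/c)`. -/
theorem stmt19 (c : ℝ) (hc : 0 < c) (m : ℕ → ℕ)
    (hm : Tendsto (fun n : ℕ => (m n : ℝ) / (n : ℝ) ^ 2) atTop (nhds c)) :
    Tendsto (fun n : ℕ => ((m n).choose n : ℝ) / ((m n + n - 1).choose n : ℝ)) atTop
      (nhds (Real.exp (-1 / c))) := by
  -- eventually `m n` is much bigger than `n`
  have hev : ∀ᶠ n : ℕ in atTop, 1 ≤ n ∧ 2 * (n : ℝ) < (m n : ℝ) := by
    have hgt : ∀ᶠ n : ℕ in atTop, c / 2 < (m n : ℝ) / (n : ℝ) ^ 2 :=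
      hm.eventually (eventually_gt_nhds (by linarith))
    have hbig : ∀ᶠ n : ℕ in atTop, 4 / c + 1 ≤ (n : ℝ) :=
      (tendsto_natCast_atTop_atTop (R := ℝ)).eventually_ge_atTop _
    filter_upwards [hgt, hbig, eventually_ge_atTop 1] with n h1 h2 h3
    refine ⟨h3, ?_⟩
    have hn0 : (0 : ℝ) < n := by exact_mod_cast h3
    have hn2 : (0 : ℝ) < (n : ℝ) ^ 2 := by positivity
    have hmgt : c / 2 * (n : ℝ) ^ 2 < (m n : ℝ) := (lt_div_iff₀ hn2).mp h1
    have hcn : 4 + c ≤ c * n := by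
      have h4 := mul_le_mul_of_nonneg_left h2 hc.le
      have : c * (4 / c + 1) = 4 + c := by field_simp
      linarith
    nlinarith [mul_le_mul_of_nonneg_right hcn hn0.le, mul_pos hc hn0]
  -- the key limit, for the shifted denominators
  have hlim : ∀ ε : ℝ, Tendsto (fun n : ℕ => -((n : ℝ) * ((n : ℝ) - 1)) / ((m n : ℝ) + ε * n))
      atTop (nhds (-1 / c)) := by
    intro ε
    have hnum : Tendsto (fun n : ℕ => -(((n : ℝ) * ((n : ℝ) - 1)) / (n : ℝ) ^ 2))
        atTop (nhds (-1)) := by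
      have h0 : Tendsto (fun n : ℕ => -(1 - 1 / (n : ℝ))) atTop (nhds (-1)) := by
        have := (tendsto_const_nhds (x := (1 : ℝ)) (f := atTop (α := ℕ))).sub
          tendsto_one_div_atTop_nhds_zero_nat
        rw [sub_zero] at this
        exact this.neg
      refine h0.congr' ?_
      filter_upwards [eventually_ge_atTop 1] with n hn
      have hn0 : (n : ℝ) ≠ 0 := by
        have : (0 : ℝ) < n := by exact_mod_cast hn
        exact this.ne'
      field_simp
    have hden : Tendsto (fun n : ℕ => ((m n : ℝ) + ε * n) / (n : ℝ) ^ 2) atTop (nhds c) := by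
      have h2 : Tendsto (fun n : ℕ => (m n : ℝ) / (n : ℝ) ^ 2 + ε * (1 / (n : ℝ)))
          atTop (nhds (c + ε * 0)) :=
        hm.add (tendsto_const_nhds.mul tendsto_one_div_atTop_nhds_zero_nat)
      rw [mul_zero, add_zero] at h2
      refine h2.congr' ?_
      filter_upwards [eventually_ge_atTop 1] with n hn
      have hn0 : (n : ℝ) ≠ 0 := by
        have : (0 : ℝ) < n := by exact_mod_cast hn
        exact this.ne'
      field_simp
    have := hnum.div hden hc.ne'
    refine this.congr' ?_
    filter_upwards [eventually_ge_atTop 1] with n hn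
    have hn0 : (n : ℝ) ≠ 0 := by
      have : (0 : ℝ) < n := by exact_mod_cast hn
      exact this.ne'
    rcases eq_or_ne ((m n : ℝ) + ε * n) 0 with hb | hb
    · simp [hb]
    · rw [Pi.div_apply]
      field_simp
  have hL : Tendsto (fun n : ℕ => Real.exp (-((n : ℝ) * ((n : ℝ) - 1)) / ((m n : ℝ) + (-1) * n)))
      atTop (nhds (Real.exp (-1 / c))) := (Real.continuous_exp.tendsto _).comp (hlim (-1))
  have hU : Tendsto (fun n : ℕ => Real.exp (-((n : ℝ) * ((n : ℝ) - 1)) / ((m n : ℝ) + 1 * n)))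
      atTop (nhds (Real.exp (-1 / c))) := (Real.continuous_exp.tendsto _).comp (hlim 1)
  refine tendsto_of_tendsto_of_tendsto_of_le_of_le' hL hU ?_ ?_
  · filter_upwards [hev] with n ⟨hn1, hn2⟩
    have hnm : (n : ℝ) < m n := by
      have : (1 : ℝ) ≤ n := by exact_mod_cast hn1
      linarith
    have hnm' : n ≤ m n := by exact_mod_cast hnm.le
    have hm1 : 1 ≤ m n := le_trans hn1 hnm'
    rw [ratio_eq (m n) n hnm' hm1]
    have he : (m n : ℝ) + (-1) * n = (m n : ℝ) - n := by ring
    rw [he]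
    exact lower_bound (m n) n hnm
  · filter_upwards [hev] with n ⟨hn1, hn2⟩
    have hnm : (n : ℝ) < m n := by
      have : (1 : ℝ) ≤ n := by exact_mod_cast hn1
      linarith
    have hnm' : n ≤ m n := by exact_mod_cast hnm.le
    have hm1 : 1 ≤ m n := le_trans hn1 hnm'
    rw [ratio_eq (m n) n hnm' hm1]
    have he : (m n : ℝ) + 1 * n = (m n : ℝ) + n := by ring
    rw [he]
    exact upper_bound (m n) n hnm
end
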